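/- Let k, ℓ, n be positive integers with 3k ≥ ℓ, and for j with ℓ/3 ≤ j ≤ k define f(j,ℓ) = 2j − ⌈ℓ/3⌉ if j < 2ℓ/3 and f(j,ℓ) = 3j − ℓ otherwise. Then the family 𝓕 = {F ∈ ([n] choose k) : |F ∩ [f(j,ℓ)]| ≥ j} satisfies |A∩B| + |B∩C| + |C∩A| ≥ ℓ for all A, B, C ∈ 𝓕, and |𝓕| = Σ_{i=j}^{k} C(f(j,ℓ), i)·C(n − f(j,ℓ), k − i). -/

import Mathlib

open Finset

lemma key_ineq (S X Y Z : Finset ℕ) (hX : X ⊆ S) (hY : Y ⊆ S) (hZ : Z ⊆ S) :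
    X.card + Y.card + Z.card ≤ (X ∩ Y).card + (Y ∩ Z).card + (Z ∩ X).card + S.card ∧
    2 * (X.card + Y.card + Z.card) ≤
      (X ∩ Y).card + (Y ∩ Z).card + (Z ∩ X).card + 3 * S.card := by
  have a1 := card_inter_add_card_union X Y
  have a2 := card_inter_add_card_union Y Z
  have a3 := card_inter_add_card_union Z X
  have b1 : (X ∪ Y).card ≤ S.card := card_le_card (union_subset hX hY)
  have b2 : (Y ∪ Z).card ≤ S.card := card_le_card (union_subset hY hZ)
  have b3 : (Z ∪ X).card ≤ S.card := card_le_card (union_subset hZ hX)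
  have c1 := card_inter_add_card_union (X ∪ Y) Z
  have c2 : ((X ∪ Y) ∩ Z).card ≤ (X ∩ Z).card + (Y ∩ Z).card := by
    rw [union_inter_distrib_right]; exact card_union_le _ _
  have c3 : ((X ∪ Y) ∪ Z).card ≤ S.card :=
    card_le_card (union_subset (union_subset hX hY) hZ)
  have e1 : (X ∩ Z).card = (Z ∩ X).card := by rw [inter_comm]
  omega

lemma count_fixed (S T : Finset ℕ) (hST : Disjoint S T) (k i : ℕ) (hik : i ≤ k) :
    (((S ∪ T).powersetCard k).filter (fun F => (F ∩ S).card = i)).card =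
      S.card.choose i * T.card.choose (k - i) := by
  rw [← card_powersetCard, ← card_powersetCard, ← card_product]
  apply Finset.card_nbij' (fun F => (F ∩ S, F ∩ T))
      (fun P => P.1 ∪ P.2)
  · intro F hF
    simp only [mem_coe, mem_filter, mem_powersetCard] at hF
    obtain ⟨⟨hFsub, hFcard⟩, hFi⟩ := hF
    have hdisj : Disjoint (F ∩ S) (F ∩ T) := hST.mono inter_subset_right inter_subset_right
    have hU : (F ∩ S) ∪ (F ∩ T) = F := by
      rw [← inter_union_distrib_left]; exact inter_eq_left.2 hFsub
    have hc : (F ∩ S).card + (F ∩ T).card = k := by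
      rw [← card_union_of_disjoint hdisj, hU, hFcard]
    simp only [mem_coe, mem_product, mem_powersetCard]
    exact ⟨⟨inter_subset_right, hFi⟩, ⟨inter_subset_right, by omega⟩⟩
  · intro P hP
    simp only [mem_coe, mem_product, mem_powersetCard] at hP
    obtain ⟨⟨h1, h2⟩, ⟨h3, h4⟩⟩ := hP
    have hdisj : Disjoint P.1 P.2 := hST.mono h1 h3
    simp only [mem_coe, mem_filter, mem_powersetCard]
    refine ⟨⟨union_subset_union h1 h3, by rw [card_union_of_disjoint hdisj]; omega⟩, ?_⟩
    rw [union_inter_distrib_right, inter_eq_left.2 h1,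
      disjoint_iff_inter_eq_empty.1 (hST.symm.mono_left h3), union_empty, h2]
  · intro F hF
    simp only [mem_coe, mem_filter, mem_powersetCard] at hF
    beta_reduce
    rw [← inter_union_distrib_left]; exact inter_eq_left.2 hF.1.1
  · intro P hP
    simp only [mem_coe, mem_product, mem_powersetCard] at hP
    obtain ⟨⟨h1, _⟩, ⟨h3, _⟩⟩ := hP
    beta_reduce
    rw [union_inter_distrib_right, inter_eq_left.2 h1,
      disjoint_iff_inter_eq_empty.1 (hST.symm.mono_left h3), union_empty,
      union_inter_distrib_right, disjoint_iff_inter_eq_empty.1 (hST.mono_left h1),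
      inter_eq_left.2 h3, empty_union]

lemma count_family (S T : Finset ℕ) (hST : Disjoint S T) (k j : ℕ) (hjk : j ≤ k) :
    (((S ∪ T).powersetCard k).filter (fun F => j ≤ (F ∩ S).card)).card =
      ∑ i ∈ Finset.Icc j k, S.card.choose i * T.card.choose (k - i) := by
  have hsplit : ((S ∪ T).powersetCard k).filter (fun F => j ≤ (F ∩ S).card) =
      (Finset.Icc j k).biUnion
        (fun i => ((S ∪ T).powersetCard k).filter (fun F => (F ∩ S).card = i)) := by
    ext F
    simp only [mem_filter, mem_biUnion, mem_Icc, mem_powersetCard]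
    constructor
    · rintro ⟨⟨h1, h2⟩, h3⟩
      exact ⟨(F ∩ S).card, ⟨h3, h2 ▸ (card_le_card inter_subset_left)⟩, ⟨h1, h2⟩, rfl⟩
    · rintro ⟨i, ⟨hi1, hi2⟩, ⟨h1, h2⟩, h3⟩
      exact ⟨⟨h1, h2⟩, h3 ▸ hi1⟩
  rw [hsplit, card_biUnion]
  · exact Finset.sum_congr rfl fun i hi => count_fixed S T hST k i (mem_Icc.1 hi).2
  · intro a _ b _ hab
    simp only [disjoint_left, mem_filter]
    rintro F ⟨_, h1⟩ ⟨_, h2⟩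
    exact hab (h1.symm.trans h2)

/-- `d A B C = |A∩B| + |B∩C| + |C∩A|`. -/
def dd (A B C : Finset ℕ) : ℕ := (A ∩ B).card + (B ∩ C).card + (C ∩ A).card

/-- `f(j,ℓ) = 2j − ⌈ℓ/3⌉` if `j < 2ℓ/3`, and `3j − ℓ` if `j ≥ 2ℓ/3`. -/
def ff (j ℓ : ℕ) : ℕ := if 3 * j < 2 * ℓ then 2 * j - (ℓ + 2) / 3 else 3 * j - ℓ

theorem stmt15 (n k ℓ j : ℕ) (hk : 0 < k) (hℓ : 0 < ℓ) (hn : 0 < n)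
    (hkℓ : ℓ ≤ 3 * k) (hjℓ : ℓ ≤ 3 * j) (hjk : j ≤ k) (hfn : ff j ℓ ≤ n) :
    (∀ A ∈ ((Finset.Icc 1 n).powersetCard k).filter
        (fun F => j ≤ (F ∩ Finset.Icc 1 (ff j ℓ)).card),
      ∀ B ∈ ((Finset.Icc 1 n).powersetCard k).filter
        (fun F => j ≤ (F ∩ Finset.Icc 1 (ff j ℓ)).card),
      ∀ C ∈ ((Finset.Icc 1 n).powersetCard k).filter
        (fun F => j ≤ (F ∩ Finset.Icc 1 (ff j ℓ)).card),
      ℓ ≤ dd A B C) ∧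
    (((Finset.Icc 1 n).powersetCard k).filter
        (fun F => j ≤ (F ∩ Finset.Icc 1 (ff j ℓ)).card)).card =
      ∑ i ∈ Finset.Icc j k, (ff j ℓ).choose i * (n - ff j ℓ).choose (k - i) := by
  set m := ff j ℓ with hmdef
  have hm : m = if 3 * j < 2 * ℓ then 2 * j - (ℓ + 2) / 3 else 3 * j - ℓ := rfl
  set S : Finset ℕ := Finset.Icc 1 m with hS
  have hcS : S.card = m := by rw [hS, Nat.card_Icc]; omega
  constructor
  · intro A hA B hB C hC
    rw [mem_filter] at hA hB hC
    have hfX : j ≤ (A ∩ S).card := hA.2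
    have hfY : j ≤ (B ∩ S).card := hB.2
    have hfZ : j ≤ (C ∩ S).card := hC.2
    obtain ⟨k1, k2⟩ := key_ineq S (A ∩ S) (B ∩ S) (C ∩ S)
      inter_subset_right inter_subset_right inter_subset_right
    have s1 : ((A ∩ S) ∩ (B ∩ S)).card ≤ (A ∩ B).card :=
      card_le_card (inter_subset_inter inter_subset_left inter_subset_left)
    have s2 : ((B ∩ S) ∩ (C ∩ S)).card ≤ (B ∩ C).card :=
      card_le_card (inter_subset_inter inter_subset_left inter_subset_left)
    have s3 : ((C ∩ S) ∩ (A ∩ S)).card ≤ (C ∩ A).card :=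
      card_le_card (inter_subset_inter inter_subset_left inter_subset_left)
    unfold dd
    rw [hcS] at k1 k2
    split_ifs at hm <;> omega
  · have hU : S ∪ Finset.Icc (m + 1) n = Finset.Icc 1 n := by
      ext x; simp only [hS, mem_union, mem_Icc]; omega
    have hD : Disjoint S (Finset.Icc (m + 1) n) := by
      rw [Finset.disjoint_left]
      intro x hx hx'
      simp only [hS, mem_Icc] at hx hx'
      omega
    have := count_family S (Finset.Icc (m + 1) n) hD k j hjk
    rw [hU, hcS, Nat.card_Icc] at this
    have hT : n + 1 - (m + 1) = n - m := by omega
    rw [hT] at this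
    exact this
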